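/- arXiv:2410.03849 — 2 statements merged into one kernel-verified Lean document; each statement's English description precedes it below -/
import Mathlib

section
/- For every nonempty class F ⊆ [0,1]^X, every α > 0, and every context tree x of depth T, the contextual Shtarkov sum satisfies S_T(F | x) ≤ (1 + 2α)^T · N∞(F∘x, α, T). -/
open scoped BigOperators

/-- The probability simplex on a finite label set `Y`. -/
abbrev Simplex (Y : Type*) [Fintype Y] :=
  {p : Y → ℝ // (∀ y, 0 ≤ p y) ∧ ∑ y, p y = 1}

/-- A sequential expert: given contexts `x₁,…,x_t` (a list of length `t`) and past labels
`y₁,…,y_{t-1}` (a list of length `t-1`), it predicts a distribution over labels. -/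
abbrev Expert (X Y : Type*) [Fintype Y] := List X → List Y → Simplex Y

/-- `-log x` as an extended real, with `-log 0 = ⊤` (and junk value `⊤` for `x < 0`). -/
noncomputable def negLog (x : ℝ) : EReal :=
  if x ≤ 0 then ⊤ else ((-Real.log x : ℝ) : EReal)

/-- `log x` as an extended real, with `log 0 = ⊥` (and junk value `⊥` for `x < 0`). -/
noncomputable def elog (x : ℝ) : EReal :=
  if x ≤ 0 then ⊥ else ((Real.log x : ℝ) : EReal)

/-- The logarithmic loss `ℓ(p, y) = -log p(y) ∈ [0, ∞]`. -/
noncomputable def logloss {Y : Type*} [Fintype Y] (p : Simplex Y) (y : Y) : EReal :=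
  negLog (p.1 y)

/-- Likelihood of expert `f` on a context sequence `xs` and a label sequence `ys`
of the same length: `L(f; y_{1:d} | x_{1:d}) = ∏_{t=1}^d f(x_{1:t}, y_{1:t-1})(y_t)`. -/
noncomputable def likelihood {X Y : Type*} [Fintype Y] [Inhabited Y]
    (f : Expert X Y) (xs : List X) (ys : List Y) : ℝ :=
  ∏ t ∈ Finset.range ys.length, (f (xs.take (t + 1)) (ys.take t)).1 (ys.getD t default)

/-- Cumulative log loss of expert `f` on `xs`, `ys`:
`Σ_{t=1}^d ℓ(f(x_{1:t}, y_{1:t-1}), y_t)`. -/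
noncomputable def cumLoss {X Y : Type*} [Fintype Y] [Inhabited Y]
    (f : Expert X Y) (xs : List X) (ys : List Y) : EReal :=
  ∑ t ∈ Finset.range ys.length, logloss (f (xs.take (t + 1)) (ys.take t)) (ys.getD t default)

/-- A context tree of depth `T` is modelled as a map `χ : List Y → X` (only its values on
lists of length `< T` matter): `x_t(y) = χ (y_{1:t-1})`.  `treePath χ ys` is the context
sequence `x(y) = (x_1, x_2(y_1), …)` obtained by tracing the tree along the path `ys`. -/
def treePath {X Y : Type*} (χ : List Y → X) (ys : List Y) : List X :=
  (List.range ys.length).map fun t => χ (ys.take t)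

/-- The contextual Shtarkov sum of `F` on a context tree `χ` of depth `r`, with prefix
`xs ∈ X^t`, `ys ∈ Y^t`:
`S_T(F, χ | x_{1:t}, y_{1:t}) = Σ_{y ∈ Y^r} sup_{f ∈ F} L(f; (y_{1:t}, y) | (x_{1:t}, χ(y)))`. -/
noncomputable def shtarkovPrefix {X Y : Type*} [Fintype Y] [Inhabited Y]
    (F : Set (Expert X Y)) (r : ℕ) (χ : List Y → X) (xs : List X) (ys : List Y) : ℝ :=
  ∑ y : Fin r → Y, ⨆ f : F,
    likelihood (f : Expert X Y) (xs ++ treePath χ (List.ofFn y)) (ys ++ List.ofFn y)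

/-- The contextual Shtarkov sum `S_T(F | χ) = Σ_{y ∈ Y^T} sup_{f ∈ F} L(f; y | χ(y))`. -/
noncomputable def shtarkov {X Y : Type*} [Fintype Y] [Inhabited Y]
    (F : Set (Expert X Y)) (T : ℕ) (χ : List Y → X) : ℝ :=
  shtarkovPrefix F T χ [] []

/-- The extensive-form game value with `r` rounds to go, given past contexts `xs`, past
labels `ys`, and accumulated learner loss `acc`:
`sup_{x} inf_{p̂} sup_{y} ⋯ [ acc + Σ ℓ(p̂_s, y_s) − inf_{f ∈ F} Σ_{s=1}^T ℓ(f, y_s) ]`. -/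
noncomputable def valToGo {X Y : Type*} [Fintype Y] [Inhabited Y]
    (F : Set (Expert X Y)) : ℕ → List X → List Y → EReal → EReal
  | 0, xs, ys, acc => acc - ⨅ f : F, cumLoss (f : Expert X Y) xs ys
  | r + 1, xs, ys, acc =>
      ⨆ x : X, ⨅ p : Simplex Y, ⨆ y : Y,
        valToGo F r (xs ++ [x]) (ys ++ [y]) (acc + logloss p y)

/-- The minimax regret
`R_T(F) = sup_{x_1} inf_{p̂_1} sup_{y_1} ⋯ sup_{x_T} inf_{p̂_T} sup_{y_T} R_T(F; p̂, x, y)`. -/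
noncomputable def minimaxRegret {X Y : Type*} [Fintype Y] [Inhabited Y]
    (F : Set (Expert X Y)) (T : ℕ) : EReal :=
  valToGo F T [] [] 0

/-- Nested conditional expectation over a probabilistic tree `π`, for `r` remaining rounds:
`E_{y_1 ∼ π([])} E_{y_2 ∼ π(y_{1:1})} ⋯ [g(y_{1:r})]`. -/
noncomputable def expTree {Y : Type*} [Fintype Y] (π : List Y → Simplex Y)
    (g : List Y → EReal) : ℕ → List Y → EReal
  | 0, pre => g pre
  | r + 1, pre => ∑ y : Y, ((π pre).1 y : EReal) * expTree π g r (pre ++ [y])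

/-- The dual (max-min) value-to-go `W(F, x_{1:t}, y_{1:t})`: the supremum over context trees
`χ` and probabilistic trees `π` of depth `r = T - t` of
`E_{y∼π}[ Σ_{s=t+1}^T ℓ(π_s(y), y_s) − inf_{f ∈ F} Σ_{s=1}^T ℓ(f, y_s) ]`. -/
noncomputable def dualValToGo {X Y : Type*} [Fintype Y] [Inhabited Y]
    (F : Set (Expert X Y)) (r : ℕ) (xs : List X) (ys : List Y) : EReal :=
  ⨆ χ : List Y → X, ⨆ π : List Y → Simplex Y,
    expTree π (fun suf =>
      (∑ s ∈ Finset.range r, logloss (π (suf.take s)) (suf.getD s default)) -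
        ⨅ f : F, cumLoss (f : Expert X Y) (xs ++ treePath χ suf) (ys ++ suf)) r []

/-- The dual (max-min) value `V_T(F)`. -/
noncomputable def dualValue {X Y : Type*} [Fintype Y] [Inhabited Y]
    (F : Set (Expert X Y)) (T : ℕ) : EReal :=
  dualValToGo F T [] []
/-- A binary-label expert class member: a function `X → [0,1]`. -/
abbrev UnitFn (X : Type*) := X → Set.Icc (0 : ℝ) 1

/-- The Bernoulli distribution on `Bool` with mean `r ∈ [0,1]` (label `true` ↔ `1`). -/
noncomputable def bernoulliOn (r : Set.Icc (0 : ℝ) 1) : Simplex Bool :=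
  ⟨fun b => if b then (r : ℝ) else 1 - (r : ℝ), by
    constructor
    · intro b
      cases b with
      | false => simpa using r.2.2
      | true => simpa using r.2.1
    · rw [Fintype.sum_bool]
      simp⟩

/-- The sequential expert induced by `f : X → [0,1]`: it predicts the Bernoulli
distribution with mean `f(x_t)`, where `x_t` is the most recent context. -/
noncomputable def bexpert {X : Type*} [Inhabited X] (f : UnitFn X) : Expert X Bool :=
  fun xs _ => bernoulliOn (f (xs.getLast?.getD default))

/-- `V` is a sequential `ℓ∞` cover of `F ∘ χ` at scale `α` and depth `T`: for every `f ∈ F`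
and every path `y ∈ {0,1}^T` there is a tree `v ∈ V` with
`|f(x_t(y)) − v_t(y)| ≤ α` for all `t ∈ [T]`. -/
def IsSeqCover {X : Type*} (F : Set (UnitFn X)) (χ : List Bool → X) (α : ℝ) (T : ℕ)
    (V : Finset (List Bool → ℝ)) : Prop :=
  ∀ f ∈ F, ∀ y : Fin T → Bool, ∃ v ∈ V, ∀ t : Fin T,
    |(f (χ ((List.ofFn y).take t)) : ℝ) - v ((List.ofFn y).take t)| ≤ α

/-- The sequential `ℓ∞` covering number `N∞(F∘χ, α, T)`: size of the smallest cover
(`⊤` if no finite cover exists). -/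
noncomputable def coveringNumber {X : Type*} (F : Set (UnitFn X)) (χ : List Bool → X)
    (α : ℝ) (T : ℕ) : ℕ∞ :=
  ⨅ (V : Finset (List Bool → ℝ)) (_ : IsSeqCover F χ α T V), (V.card : ℕ∞)

/-- `log` of an extended natural number, valued in the extended reals. -/
noncomputable def elogENat (n : ℕ∞) : EReal :=
  WithTop.recTopCoe ⊤ (fun k => elog (k : ℝ)) n

/-- An extended natural number as an extended real. -/
noncomputable def enatToEReal (n : ℕ∞) : EReal :=
  WithTop.recTopCoe ⊤ (fun k => ((k : ℝ) : EReal)) n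

/-- The sequential `ℓ∞` entropy `H∞(F, α, T) = sup_χ log N∞(F∘χ, α, T)`. -/
noncomputable def seqEntropy {X : Type*} (F : Set (UnitFn X)) (α : ℝ) (T : ℕ) : EReal :=
  ⨆ χ : List Bool → X, elogENat (coveringNumber F χ α T)

noncomputable def wgt (α : ℝ) (v : List Bool → ℝ) (l : List Bool) (b : Bool) : ℝ :=
  if b then max 0 (min 1 (v l)) + α else 1 - max 0 (min 1 (v l)) + α

lemma wgt_nonneg {α : ℝ} (hα : 0 ≤ α) (v : List Bool → ℝ) (l : List Bool) (b : Bool) :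
    0 ≤ wgt α v l b := by
  rcases b <;> simp [wgt]
  · have : max 0 (min 1 (v l)) ≤ 1 := by
      apply max_le (by norm_num) (min_le_left _ _)
    linarith
  · have : (0:ℝ) ≤ max 0 (min 1 (v l)) := le_max_left _ _
    linarith

lemma wgt_sum (α : ℝ) (v : List Bool → ℝ) (l : List Bool) :
    wgt α v l true + wgt α v l false = 1 + 2 * α := by
  simp [wgt]; ring

lemma sum_pi_succ {M : Type*} [AddCommMonoid M] (r : ℕ) (f : (Fin (r+1) → Bool) → M) :
    ∑ y : Fin (r+1) → Bool, f y = ∑ b : Bool, ∑ y' : Fin r → Bool, f (Fin.cons b y') := by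
  rw [← Equiv.sum_comp (Fin.consEquiv (fun _ : Fin (r+1) => Bool))]
  rw [Fintype.sum_prod_type]
  simp [Fin.consEquiv]

lemma sum_prod_wgt (α : ℝ) (v : List Bool → ℝ) :
    ∀ (r : ℕ) (pre : List Bool),
      ∑ y : Fin r → Bool, ∏ t ∈ Finset.range r,
        wgt α v (pre ++ (List.ofFn y).take t) ((List.ofFn y).getD t default)
      = (1 + 2 * α) ^ r := by
  intro r
  induction r with
  | zero => intro pre; simp
  | succ r ih =>
    intro pre
    rw [sum_pi_succ]
    have step : ∀ (b : Bool) (y' : Fin r → Bool),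
        (∏ t ∈ Finset.range (r+1),
          wgt α v (pre ++ (List.ofFn (Fin.cons b y' : Fin (r+1) → Bool)).take t)
            ((List.ofFn (Fin.cons b y' : Fin (r+1) → Bool)).getD t default))
        = wgt α v pre b * ∏ t ∈ Finset.range r,
            wgt α v ((pre ++ [b]) ++ (List.ofFn y').take t) ((List.ofFn y').getD t default) := by
      intro b y'
      have hofn : List.ofFn (Fin.cons b y' : Fin (r+1) → Bool) = b :: List.ofFn y' := by
        rw [List.ofFn_succ]; simp
      rw [hofn, Finset.prod_range_succ']
      rw [mul_comm]
      congr 1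
      · simp
      · apply Finset.prod_congr rfl
        intro t _
        simp [List.append_assoc]
    simp only [step]
    rw [Fintype.sum_bool]
    rw [← Finset.mul_sum, ← Finset.mul_sum, ih, ih]
    rw [pow_succ]
    have h := wgt_sum α v pre
    linear_combination ((1 + 2 * α) ^ r) * h

lemma factor_le_wgt {α : ℝ} (hα : 0 ≤ α) (r : Set.Icc (0:ℝ) 1) {vl : ℝ}
    (h : |(r:ℝ) - vl| ≤ α) (b : Bool) (v : List Bool → ℝ) (l : List Bool) (hv : v l = vl) :
    (if b then (r:ℝ) else 1 - r) ≤ wgt α v l b := by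
  rw [abs_le] at h
  have h1 := r.2.1; have h2 := r.2.2
  rcases b <;> simp [wgt, hv]
  · -- false case: 1 - r ≤ 1 - max 0 (min 1 vl) + α, i.e. max ≤ r + α
    have : max 0 (min 1 vl) ≤ (r:ℝ) + α := by
      apply max_le (by linarith)
      calc min 1 vl ≤ vl := min_le_right _ _
        _ ≤ (r:ℝ) + α := by linarith
    linarith
  · -- true case: r ≤ max 0 (min 1 vl) + α
    have : (r:ℝ) - α ≤ min 1 vl := le_min (by linarith) (by linarith)
    have := le_max_right (0:ℝ) (min 1 vl)
    linarith

lemma likelihood_bexpert {X : Type*} [Inhabited X] (f : UnitFn X) (χ : List Bool → X)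
    (L : List Bool) :
    likelihood (bexpert f) (treePath χ L) L =
      ∏ t ∈ Finset.range L.length,
        (if L.getD t default then (f (χ (L.take t)) : ℝ) else 1 - (f (χ (L.take t)) : ℝ)) := by
  unfold likelihood
  apply Finset.prod_congr rfl
  intro t ht
  rw [Finset.mem_range] at ht
  have hx : (treePath χ L).take (t+1) = ((List.range (t+1)).map fun s => χ (L.take s)) := by
    unfold treePath
    rw [← List.map_take, List.take_range, min_eq_left (by omega)]
  have hlast : ((treePath χ L).take (t+1)).getLast?.getD default = χ (L.take t) := by
    rw [hx, List.range_succ, List.map_append]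
    simp
  simp [bexpert, bernoulliOn, hlast]

lemma shtarkov_le_card_mul {X : Type*} [Inhabited X] (F : Set (UnitFn X)) (hF : F.Nonempty)
    (T : ℕ) (α : ℝ) (hα : 0 < α) (χ : List Bool → X) (V : Finset (List Bool → ℝ))
    (hV : IsSeqCover F χ α T V) :
    shtarkov (bexpert '' F) T χ ≤ (V.card : ℝ) * (1 + 2 * α) ^ T := by
  classical
  have hne : Nonempty ((bexpert '' F : Set (Expert X Bool))) := (hF.image _).to_subtype
  unfold shtarkov shtarkovPrefix
  simp only [List.nil_append]
  have hstep : ∀ y : Fin T → Bool,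
      (⨆ f : (bexpert '' F : Set (Expert X Bool)),
        likelihood (f : Expert X Bool) (treePath χ (List.ofFn y)) (List.ofFn y))
      ≤ ∑ v ∈ V, ∏ t ∈ Finset.range T,
          wgt α v ((List.ofFn y).take t) ((List.ofFn y).getD t default) := by
    intro y
    apply ciSup_le
    intro g
    obtain ⟨f, hfF, hfe⟩ := g.2
    obtain ⟨v, hvV, hvb⟩ := hV f hfF y
    have h1 : likelihood (g : Expert X Bool) (treePath χ (List.ofFn y)) (List.ofFn y)
        ≤ ∏ t ∈ Finset.range T,
            wgt α v ((List.ofFn y).take t) ((List.ofFn y).getD t default) := by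
      have : (g : Expert X Bool) = bexpert f := hfe.symm
      rw [this, likelihood_bexpert]
      rw [List.length_ofFn]
      apply Finset.prod_le_prod
      · intro t _
        have h2 := (f (χ ((List.ofFn y).take t))).2.1
        have h3 := (f (χ ((List.ofFn y).take t))).2.2
        split <;> linarith
      · intro t ht
        rw [Finset.mem_range] at ht
        exact factor_le_wgt hα.le _ (hvb ⟨t, ht⟩) _ v _ rfl
    refine h1.trans ?_
    apply Finset.single_le_sum (f := fun v => ∏ t ∈ Finset.range T,
        wgt α v ((List.ofFn y).take t) ((List.ofFn y).getD t default)) ?_ hvV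
    intro w _
    exact Finset.prod_nonneg fun t _ => wgt_nonneg hα.le w _ _
  calc (∑ y : Fin T → Bool, ⨆ f : (bexpert '' F : Set (Expert X Bool)),
        likelihood (f : Expert X Bool) (treePath χ (List.ofFn y)) (List.ofFn y))
      ≤ ∑ y : Fin T → Bool, ∑ v ∈ V, ∏ t ∈ Finset.range T,
          wgt α v ((List.ofFn y).take t) ((List.ofFn y).getD t default) :=
        Finset.sum_le_sum fun y _ => hstep y
    _ = ∑ v ∈ V, ∑ y : Fin T → Bool, ∏ t ∈ Finset.range T,
          wgt α v ((List.ofFn y).take t) ((List.ofFn y).getD t default) := Finset.sum_comm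
    _ = ∑ v ∈ V, (1 + 2 * α) ^ T := by
        apply Finset.sum_congr rfl
        intro v _
        have := sum_prod_wgt α v T []
        simpa using this
    _ = (V.card : ℝ) * (1 + 2 * α) ^ T := by
        rw [Finset.sum_const, nsmul_eq_mul]

/-- For every nonempty class `F ⊆ [0,1]^X`, every `α > 0` and every context
tree `χ` of depth `T`, the contextual Shtarkov sum satisfies
`S_T(F | χ) ≤ (1 + 2α)^T · N∞(F∘χ, α, T)`. -/
theorem shtarkov_le_coveringNumber
    {X : Type*} [Inhabited X] (F : Set (UnitFn X)) (hF : F.Nonempty)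
    (T : ℕ) (α : ℝ) (hα : 0 < α) (χ : List Bool → X) :
    ((shtarkov (bexpert '' F) T χ : ℝ) : EReal) ≤
      ((((1 + 2 * α) ^ T : ℝ)) : EReal) * enatToEReal (coveringNumber F χ α T) := by
  classical
  rcases eq_top_or_lt_top (coveringNumber F χ α T) with htop | hlt
  · rw [htop]
    have : enatToEReal ⊤ = ⊤ := rfl
    rw [this, EReal.coe_mul_top_of_pos (by positivity)]
    exact le_top
  · obtain ⟨k, hk⟩ := WithTop.ne_top_iff_exists.1 hlt.ne
    have hlt2 : coveringNumber F χ α T < ((k + 1 : ℕ) : ℕ∞) := by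
      rw [← hk]; exact Nat.cast_lt.2 (Nat.lt_succ_self k)
    rw [coveringNumber, iInf_lt_iff] at hlt2
    obtain ⟨V, hV⟩ := hlt2
    rw [iInf_lt_iff] at hV
    obtain ⟨hVc, hVcard⟩ := hV
    have hcard : V.card ≤ k := by
      have : V.card < k + 1 := by exact_mod_cast hVcard
      omega
    have key := shtarkov_le_card_mul F hF T α hα χ V hVc
    have key2 : shtarkov (bexpert '' F) T χ ≤ (1 + 2 * α) ^ T * (k : ℝ) := by
      have hp : (0:ℝ) ≤ (1 + 2 * α) ^ T := by positivity
      calc shtarkov (bexpert '' F) T χ ≤ (V.card : ℝ) * (1 + 2 * α) ^ T := key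
        _ ≤ (k : ℝ) * (1 + 2 * α) ^ T := by
            apply mul_le_mul_of_nonneg_right _ hp
            exact_mod_cast hcard
        _ = (1 + 2 * α) ^ T * (k : ℝ) := mul_comm _ _
    rw [← hk]
    unfold enatToEReal
    change _ ≤ _ * (((k:ℝ):EReal))
    rw [← EReal.coe_mul]
    exact_mod_cast key2
end

section
/- For every nonempty class F of sequential experts, every t ∈ {0,…,T}, and all sequences x_{1:t} ∈ X^t, y_{1:t} ∈ Y^t, the value-to-go equals the worst-case log contextual Shtarkov sum with prefix: G(F, x_{1:t}, y_{1:t}) = sup_x log S_T(F, x | x_{1:t}, y_{1:t}), the supremum being over all context trees x of depth T−t (equality in the extended reals). -/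
open scoped BigOperators

section Aux

lemma negLog_ne_bot (x : ℝ) : negLog x ≠ ⊥ := by
  unfold negLog; split <;> simp

lemma elog_eq_neg_negLog (x : ℝ) : elog x = - negLog x := by
  unfold elog negLog; split <;> simp

lemma negLog_eq_neg_elog (x : ℝ) : negLog x = - elog x := by
  rw [elog_eq_neg_negLog, neg_neg]

lemma negLog_nonneg {x : ℝ} (h : x ≤ 1) : 0 ≤ negLog x := by
  unfold negLog; split
  · exact le_top
  · push_neg at *
    rw [← EReal.coe_zero, EReal.coe_le_coe_iff]
    simp [Real.log_nonpos (by linarith) h]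

lemma negLog_antitone {a b : ℝ} (ha : 0 ≤ a) (hab : a ≤ b) : negLog b ≤ negLog a := by
  unfold negLog
  rcases le_or_gt a 0 with h | h
  · simp [h]
  · rw [if_neg (by linarith), if_neg (by linarith)]
    rw [EReal.coe_le_coe_iff]
    have := Real.log_le_log h hab
    linarith

lemma elog_monotone {a b : ℝ} (hab : a ≤ b) : elog a ≤ elog b := by
  unfold elog
  rcases le_or_gt a 0 with h | h
  · simp [h]
  · rw [if_neg (by linarith), if_neg (by linarith)]
    rw [EReal.coe_le_coe_iff]
    exact Real.log_le_log h hab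

lemma negLog_mul {a b : ℝ} (ha : 0 ≤ a) (hb : 0 ≤ b) :
    negLog (a * b) = negLog a + negLog b := by
  rcases eq_or_lt_of_le ha with rfl | ha'
  · rw [zero_mul]
    rw [show negLog 0 = ⊤ by simp [negLog]]
    exact (EReal.top_add_of_ne_bot (negLog_ne_bot b)).symm
  rcases eq_or_lt_of_le hb with rfl | hb'
  · rw [mul_zero]
    rw [show negLog 0 = ⊤ by simp [negLog]]
    exact (EReal.add_top_of_ne_bot (negLog_ne_bot a)).symm
  unfold negLog
  rw [if_neg (by nlinarith), if_neg (by linarith), if_neg (by linarith),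
    ← EReal.coe_add]
  congr 1
  rw [Real.log_mul ha'.ne' hb'.ne']
  ring

lemma negLog_prod {ι : Type*} (s : Finset ι) (g : ι → ℝ) (hg : ∀ i ∈ s, 0 ≤ g i) :
    negLog (∏ i ∈ s, g i) = ∑ i ∈ s, negLog (g i) := by
  induction s using Finset.cons_induction_on with
  | empty => simp [negLog]
  | cons a s' hx ih =>
    rw [Finset.prod_cons, Finset.sum_cons,
      negLog_mul (hg a (Finset.mem_cons_self a s'))
        (Finset.prod_nonneg fun i hi => hg i (Finset.mem_cons_of_mem hi)),
      ih fun i hi => hg i (Finset.mem_cons_of_mem hi)]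
lemma EReal.iInf_neg' {ι : Type*} (g : ι → EReal) : ⨅ i, -(g i) = -(⨆ i, g i) := by
  apply le_antisymm
  · rw [← EReal.neg_le_neg_iff, neg_neg]
    apply iSup_le
    intro i
    rw [← EReal.neg_le_neg_iff, neg_neg]
    exact iInf_le _ i
  · exact le_iInf fun i => EReal.neg_le_neg_iff.mpr (le_iSup g i)

/-- elog commutes with real ciSup for nonneg bounded families. -/
lemma elog_ciSup {ι : Type*} [Nonempty ι] (f : ι → ℝ) (h0 : ∀ i, 0 ≤ f i)
    (hb : BddAbove (Set.range f)) : elog (⨆ i, f i) = ⨆ i, elog (f i) := by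
  apply le_antisymm
  · by_contra h
    push_neg at h
    obtain ⟨c, hc1, hc2⟩ := EReal.lt_iff_exists_real_btwn.mp h
    -- c : ℝ with ⨆ elog < c < elog (⨆ f)
    have hSpos : ¬ (⨆ i, f i) ≤ 0 := by
      intro hle
      rw [elog, if_pos hle] at hc2
      exact absurd hc2 (by simp)
    push_neg at hSpos
    rw [elog, if_neg (not_le.mpr hSpos)] at hc2
    have hcS : c < Real.log (⨆ i, f i) := EReal.coe_lt_coe_iff.mp hc2
    have hexp : Real.exp c < ⨆ i, f i := by
      have := Real.exp_lt_exp.mpr hcS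
      rwa [Real.exp_log hSpos] at this
    obtain ⟨i, hi⟩ := exists_lt_of_lt_ciSup hexp
    have : (c : EReal) ≤ elog (f i) := by
      rw [elog, if_neg (not_le.mpr ((Real.exp_pos c).trans hi))]
      rw [EReal.coe_le_coe_iff]
      calc c = Real.log (Real.exp c) := (Real.log_exp c).symm
        _ ≤ Real.log (f i) := Real.log_le_log (Real.exp_pos c) hi.le
    exact absurd (this.trans (le_iSup (fun i => elog (f i)) i)) (not_le.mpr hc1)
  · exact iSup_le fun i => elog_monotone (le_ciSup hb i)

lemma iInf_negLog {ι : Type*} [Nonempty ι] (f : ι → ℝ) (h0 : ∀ i, 0 ≤ f i)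
    (hb : BddAbove (Set.range f)) : ⨅ i, negLog (f i) = negLog (⨆ i, f i) := by
  simp only [negLog_eq_neg_elog]
  rw [EReal.iInf_neg', elog_ciSup f h0 hb]

lemma EReal.neg_add_cancel_left (a : ℝ) (x : EReal) :
    ((-a : ℝ) : EReal) + ((a : EReal) + x) = x := by
  induction x with
  | bot => simp
  | top =>
    rw [EReal.add_top_of_ne_bot (by simp), EReal.add_top_of_ne_bot (by simp)]
  | coe x =>
    norm_cast
    ring

/-- order iso given by adding a real constant -/
noncomputable def ERealAddIso (a : ℝ) : EReal ≃o EReal where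
  toFun x := (a : EReal) + x
  invFun x := ((-a : ℝ) : EReal) + x
  left_inv x := EReal.neg_add_cancel_left a x
  right_inv x := by
    have := EReal.neg_add_cancel_left (-a) x
    rwa [neg_neg] at this
  map_rel_iff' := by
    intro x y
    constructor
    · intro hxy
      have h2 := add_le_add_right hxy (((-a : ℝ)) : EReal)
      simp only [Equiv.coe_fn_mk] at h2
      rwa [EReal.neg_add_cancel_left, EReal.neg_add_cancel_left] at h2
    · intro hxy
      exact add_le_add_right hxy (a : EReal)

lemma ERealAddIso_apply (a : ℝ) (x : EReal) : ERealAddIso a x = (a : EReal) + x := rfl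

/-- adding a non-⊥ constant commutes with iSup on EReal. -/
lemma EReal.add_iSup' {ι : Type*} [Nonempty ι] {a : EReal} (ha : a ≠ ⊥) (g : ι → EReal) :
    a + ⨆ i, g i = ⨆ i, (a + g i) := by
  induction a with
  | bot => exact absurd rfl ha
  | top =>
    by_cases h : ∃ i, g i ≠ ⊥
    · obtain ⟨i, hi⟩ := h
      rw [EReal.top_add_of_ne_bot]
      · apply le_antisymm le_top ?_ |>.symm
        refine le_trans ?_ (le_iSup _ i)
        rw [EReal.top_add_of_ne_bot hi]
      · intro hsup
        exact hi (le_bot_iff.mp (hsup ▸ le_iSup g i))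
    · push_neg at h
      have : ∀ i, g i = ⊥ := h
      simp [this, iSup_const]
  | coe a =>
    exact ((ERealAddIso a).map_iSup g : _)

lemma EReal.coe_add_iInf {ι : Type*} (a : ℝ) (g : ι → EReal) :
    (a : EReal) + ⨅ i, g i = ⨅ i, (a + g i) :=
  ((ERealAddIso a).map_iInf g : _)

lemma EReal.coe_add_iSup {ι : Type*} (a : ℝ) (g : ι → EReal) :
    (a : EReal) + ⨆ i, g i = ⨆ i, (a + g i) :=
  ((ERealAddIso a).map_iSup g : _)

/-- sup over independent choices of a finite sum equals sum of sups (reals). -/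
lemma ciSup_sum_eq {Y κ : Type*} [Fintype Y] [Nonempty Y] [Nonempty κ] (g : Y → κ → ℝ)
    (hb : ∀ y, BddAbove (Set.range (g y))) :
    ⨆ h : Y → κ, ∑ y, g y (h y) = ∑ y, ⨆ k, g y k := by
  have hub : ∀ h : Y → κ, ∑ y, g y (h y) ≤ ∑ y, ⨆ k, g y k :=
    fun h => Finset.sum_le_sum fun y _ => le_ciSup (hb y) (h y)
  apply le_antisymm (ciSup_le hub)
  apply le_of_forall_pos_le_add
  intro ε hε
  set n : ℕ := Fintype.card Y with hn
  have hn0 : 0 < (n : ℝ) := by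
    have := Fintype.card_pos (α := Y)
    exact_mod_cast this
  have hchoice : ∀ y : Y, ∃ k : κ, (⨆ k, g y k) - ε / n < g y k := by
    intro y
    have : (⨆ k, g y k) - ε / n < ⨆ k, g y k := by
      have : 0 < ε / n := by positivity
      linarith
    exact exists_lt_of_lt_ciSup this
  choose h hh using hchoice
  have : ∑ y, ⨆ k, g y k ≤ (∑ y, g y (h y)) + ε := by
    have : ∑ y : Y, ((⨆ k, g y k) - ε / n) ≤ ∑ y, g y (h y) :=
      Finset.sum_le_sum fun y _ => (hh y).le
    have hsum : ∑ y : Y, ((⨆ k, g y k) - ε / n) = (∑ y, ⨆ k, g y k) - ε := by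
      rw [Finset.sum_sub_distrib, Finset.sum_const, Finset.card_univ]
      rw [nsmul_eq_mul]
      field_simp
      rw [← hn]
      ring
    linarith [hsum ▸ this]
  refine this.trans (add_le_add_left ?_ ε)
  exact le_ciSup (f := fun h : Y → κ => ∑ y, g y (h y)) ⟨∑ y, ⨆ k, g y k, by
    rintro _ ⟨h', rfl⟩; exact hub h'⟩ h

section Facts
variable {X Y : Type*} [Fintype Y] [Inhabited Y]

lemma simplex_nonneg (p : Simplex Y) (y : Y) : 0 ≤ p.1 y := p.2.1 y

lemma simplex_le_one (p : Simplex Y) (y : Y) : p.1 y ≤ 1 := by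
  have := Finset.single_le_sum (f := p.1) (fun i _ => p.2.1 i) (Finset.mem_univ y)
  rw [p.2.2] at this
  exact this

lemma logloss_nonneg (p : Simplex Y) (y : Y) : 0 ≤ logloss p y :=
  negLog_nonneg (simplex_le_one p y)

lemma logloss_ne_bot (p : Simplex Y) (y : Y) : logloss p y ≠ ⊥ :=
  negLog_ne_bot _

lemma likelihood_nonneg (f : Expert X Y) (xs : List X) (ys : List Y) :
    0 ≤ likelihood f xs ys :=
  Finset.prod_nonneg fun t _ => simplex_nonneg _ _

lemma likelihood_le_one (f : Expert X Y) (xs : List X) (ys : List Y) :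
    likelihood f xs ys ≤ 1 :=
  Finset.prod_le_one (fun t _ => simplex_nonneg _ _) (fun t _ => simplex_le_one _ _)

lemma cumLoss_eq_negLog (f : Expert X Y) (xs : List X) (ys : List Y) :
    cumLoss f xs ys = negLog (likelihood f xs ys) := by
  rw [cumLoss, likelihood, negLog_prod _ _ fun t _ => simplex_nonneg _ _]
  rfl

lemma shtarkovPrefix_nonneg (F : Set (Expert X Y)) (hF : F.Nonempty) (r : ℕ)
    (χ : List Y → X) (xs : List X) (ys : List Y) :
    0 ≤ shtarkovPrefix F r χ xs ys := by
  have : Nonempty F := hF.to_subtype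
  refine Finset.sum_nonneg fun y _ => ?_
  exact le_ciSup_of_le ⟨1, by rintro _ ⟨f, rfl⟩; exact likelihood_le_one _ _ _⟩
    (Classical.arbitrary F) (likelihood_nonneg _ _ _)

lemma shtarkovPrefix_le (F : Set (Expert X Y)) (hF : F.Nonempty) (r : ℕ)
    (χ : List Y → X) (xs : List X) (ys : List Y) :
    shtarkovPrefix F r χ xs ys ≤ (Fintype.card Y) ^ r := by
  have : Nonempty F := hF.to_subtype
  calc shtarkovPrefix F r χ xs ys ≤ ∑ _y : Fin r → Y, (1 : ℝ) := by
        refine Finset.sum_le_sum fun y _ => ?_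
        exact ciSup_le fun f => likelihood_le_one _ _ _
    _ = (Fintype.card Y) ^ r := by
        rw [Finset.sum_const, Finset.card_univ, Fintype.card_fun]
        simp

lemma bddAbove_shtarkov (F : Set (Expert X Y)) (hF : F.Nonempty) (r : ℕ)
    (xs : List X) (ys : List Y) :
    BddAbove (Set.range fun χ : List Y → X => shtarkovPrefix F r χ xs ys) := by
  exact ⟨(Fintype.card Y) ^ r, by rintro _ ⟨χ, rfl⟩; exact shtarkovPrefix_le F hF r χ xs ys⟩

lemma treePath_cons (χ : List Y → X) (y : Y) (l : List Y) :
    treePath χ (y :: l) = χ [] :: treePath (fun s => χ (y :: s)) l := by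
  unfold treePath
  rw [List.length_cons, List.range_succ_eq_map, List.map_cons, List.map_map]
  simp [Function.comp]

lemma shtarkovPrefix_zero (F : Set (Expert X Y)) (χ : List Y → X)
    (xs : List X) (ys : List Y) :
    shtarkovPrefix F 0 χ xs ys = ⨆ f : F, likelihood (f : Expert X Y) xs ys := by
  rw [shtarkovPrefix]
  rw [Finset.sum_eq_single_of_mem (fun _ : Fin 0 => default) (Finset.mem_univ _)
    (fun b _ hb => absurd (funext fun i => i.elim0) hb)]
  simp [treePath]

lemma shtarkovPrefix_succ (F : Set (Expert X Y)) (r : ℕ) (χ : List Y → X)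
    (xs : List X) (ys : List Y) :
    shtarkovPrefix F (r + 1) χ xs ys =
      ∑ y : Y, shtarkovPrefix F r (fun s => χ (y :: s)) (xs ++ [χ []]) (ys ++ [y]) := by
  rw [shtarkovPrefix, ← (Fin.consEquiv (fun _ : Fin (r + 1) => Y)).sum_comp, Fintype.sum_prod_type]
  refine Finset.sum_congr rfl fun y _ => ?_
  rw [shtarkovPrefix]
  refine Finset.sum_congr rfl fun v _ => ?_
  have hofn : List.ofFn ((Fin.consEquiv (fun _ : Fin (r + 1) => Y)) (y, v)) = y :: List.ofFn v := by
    rw [List.ofFn_succ]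
    simp [Fin.consEquiv]
  rw [hofn, treePath_cons]
  congr 1
  · ext f
    congr 1 <;> simp
  
end Facts

lemma EReal.add_ne_bot' {x y : EReal} (hx : x ≠ ⊥) (hy : y ≠ ⊥) : x + y ≠ ⊥ := by
  intro h
  rcases EReal.add_eq_bot_iff.mp h with h | h
  · exact hx h
  · exact hy h

section Core
variable {Y : Type*} [Fintype Y] [Inhabited Y]

noncomputable def uniformSimplex (Y : Type*) [Fintype Y] [Inhabited Y] : Simplex Y :=
  ⟨fun _ => (Fintype.card Y : ℝ)⁻¹, fun _ => by positivity, by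
    rw [Finset.sum_const, Finset.card_univ, nsmul_eq_mul]
    rw [mul_inv_cancel₀]
    exact_mod_cast Fintype.card_ne_zero⟩

instance : Nonempty (Simplex Y) := ⟨uniformSimplex Y⟩

/-- acc-free core Shtarkov minimax identity. -/
lemma core0 (d : Y → ℝ) (hd : ∀ y, 0 ≤ d y) (hS : 0 < ∑ y, d y) :
    ⨅ p : Simplex Y, ⨆ y : Y, (logloss p y + elog (d y)) =
      ((Real.log (∑ y, d y) : ℝ) : EReal) := by
  set S := ∑ y, d y with hSdef
  apply le_antisymm
  · -- choose p* = d / S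
    have hpstar : ∀ y, 0 ≤ d y / S := fun y => div_nonneg (hd y) hS.le
    have hsum : ∑ y, d y / S = 1 := by
      rw [← Finset.sum_div, ← hSdef, div_self hS.ne']
    refine iInf_le_of_le ⟨fun y => d y / S, hpstar, hsum⟩ (iSup_le fun y => ?_)
    rcases eq_or_lt_of_le (hd y) with h0 | h0
    · rw [show elog (d y) = ⊥ by rw [elog, if_pos (le_of_eq h0.symm)]]
      rw [EReal.add_bot]
      exact bot_le
    · have hdyS : 0 < d y / S := div_pos h0 hS
      rw [show elog (d y) = ((Real.log (d y) : ℝ) : EReal) by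
        rw [elog, if_neg (not_le.mpr h0)]]
      rw [show logloss ⟨fun y => d y / S, hpstar, hsum⟩ y =
          ((-Real.log (d y / S) : ℝ) : EReal) by
        rw [logloss, negLog, if_neg (not_le.mpr hdyS)]]
      rw [← EReal.coe_add, EReal.coe_le_coe_iff, Real.log_div h0.ne' hS.ne']
      ring_nf
      exact le_refl _
  · refine le_iInf fun p => ?_
    -- find y with 0 < d y and p y ≤ d y / S
    have hexists : ∃ y, 0 < d y ∧ p.1 y ≤ d y / S := by
      by_contra h
      push_neg at h
      have h1 : ∀ y ∈ Finset.univ, d y / S ≤ p.1 y := by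
        intro y _
        rcases eq_or_lt_of_le (hd y) with h0 | h0
        · rw [← h0]; simpa using p.2.1 y
        · exact (h y h0).le
      have h2 : ∃ y ∈ Finset.univ, d y / S < p.1 y := by
        obtain ⟨y, hy⟩ : ∃ y, 0 < d y := by
          by_contra hc
          push_neg at hc
          have : S ≤ 0 := Finset.sum_nonpos fun y _ => hc y
          linarith
        exact ⟨y, Finset.mem_univ y, h y hy⟩
      have := Finset.sum_lt_sum h1 h2
      rw [← Finset.sum_div, ← hSdef, div_self hS.ne', p.2.2] at this
      exact lt_irrefl 1 this
    obtain ⟨y, hdy, hpy⟩ := hexists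
    refine le_trans ?_ (le_iSup _ y)
    have h1 : ((Real.log S : ℝ) : EReal) = negLog (d y / S) + elog (d y) := by
      rw [negLog, if_neg (not_le.mpr (div_pos hdy hS)), elog, if_neg (not_le.mpr hdy),
        ← EReal.coe_add, EReal.coe_eq_coe_iff, Real.log_div hdy.ne' hS.ne']
      ring
    rw [h1]
    exact add_le_add (negLog_antitone (p.2.1 y) hpy) (le_refl _)

/-- core Shtarkov minimax identity with accumulator. -/
lemma core (acc : EReal) (hacc : acc ≠ ⊥) (d : Y → ℝ) (hd : ∀ y, 0 ≤ d y) :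
    ⨅ p : Simplex Y, ⨆ y : Y, (acc + (logloss p y + elog (d y))) =
      acc + elog (∑ y, d y) := by
  rcases le_or_gt (∑ y, d y) 0 with hS | hS
  · have hz : ∀ y, d y = 0 := by
      intro y
      have h1 : ∑ y, d y = 0 :=
        le_antisymm hS (Finset.sum_nonneg fun y _ => hd y)
      exact (Finset.sum_eq_zero_iff_of_nonneg fun y _ => hd y).mp h1 y (Finset.mem_univ y)
    have helog : ∀ y : Y, elog (d y) = ⊥ := fun y => by rw [elog, if_pos (hz y).le]
    have : ∀ (p : Simplex Y) (y : Y), acc + (logloss p y + elog (d y)) = ⊥ := by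
      intro p y
      rw [helog, EReal.add_bot, EReal.add_bot]
    simp only [this]
    rw [show elog (∑ y, d y) = ⊥ by rw [elog, if_pos hS], EReal.add_bot]
    simp [iSup_const, iInf_const]
  · have helogS : elog (∑ y, d y) = ((Real.log (∑ y, d y) : ℝ) : EReal) := by
      rw [elog, if_neg (not_le.mpr hS)]
    induction acc with
    | bot => exact absurd rfl hacc
    | top =>
      rw [helogS, EReal.top_add_of_ne_bot (by simp)]
      refine le_antisymm le_top (le_iInf fun p => ?_)
      obtain ⟨y, hy⟩ : ∃ y, 0 < d y := by
        by_contra hc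
        push_neg at hc
        have : ∑ y, d y ≤ 0 := Finset.sum_nonpos fun y _ => hc y
        linarith
      refine le_trans ?_ (le_iSup _ y)
      rw [EReal.top_add_of_ne_bot]
      refine EReal.add_ne_bot' (logloss_ne_bot p y) ?_
      rw [elog, if_neg (not_le.mpr hy)]
      simp
    | coe a =>
      have h1 : ∀ p : Simplex Y, (⨆ y : Y, ((a : EReal) + (logloss p y + elog (d y)))) =
          (a : EReal) + ⨆ y : Y, (logloss p y + elog (d y)) :=
        fun p => (EReal.coe_add_iSup a _).symm
      simp only [h1]
      rw [← EReal.coe_add_iInf a (fun p : Simplex Y => ⨆ y : Y, (logloss p y + elog (d y))),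
        core0 d hd hS, helogS]
  
end Core

section Main
variable {X Y : Type*} [Fintype Y] [Inhabited Y] [Nonempty X]

lemma bddAbove_likelihood (F : Set (Expert X Y)) (xs : List X) (ys : List Y) :
    BddAbove (Set.range fun f : F => likelihood (f : Expert X Y) xs ys) :=
  ⟨1, by rintro _ ⟨f, rfl⟩; exact likelihood_le_one _ _ _⟩

lemma main_induction (F : Set (Expert X Y)) (hF : F.Nonempty) :
    ∀ (r : ℕ) (xs : List X) (ys : List Y) (acc : EReal), acc ≠ ⊥ →
      valToGo F r xs ys acc =
        acc + ⨆ χ : List Y → X, elog (shtarkovPrefix F r χ xs ys) := by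
  have hne : Nonempty F := hF.to_subtype
  intro r
  induction r with
  | zero =>
    intro xs ys acc hacc
    rw [valToGo]
    have h1 : (⨅ f : F, cumLoss (f : Expert X Y) xs ys) =
        negLog (⨆ f : F, likelihood (f : Expert X Y) xs ys) := by
      simp only [cumLoss_eq_negLog]
      exact iInf_negLog _ (fun f => likelihood_nonneg _ _ _) (bddAbove_likelihood F xs ys)
    have h2 : ∀ χ : List Y → X, shtarkovPrefix F 0 χ xs ys =
        ⨆ f : F, likelihood (f : Expert X Y) xs ys := fun χ => shtarkovPrefix_zero F χ xs ys
    simp only [h2, iSup_const]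
    rw [h1, sub_eq_add_neg, ← elog_eq_neg_negLog]
  | succ r ih =>
    intro xs ys acc hacc
    rw [valToGo]
    -- rewrite inner valToGo via IH
    have hstep : ∀ (x : X) (p : Simplex Y) (y : Y),
        valToGo F r (xs ++ [x]) (ys ++ [y]) (acc + logloss p y) =
          acc + (logloss p y +
            ⨆ χ : List Y → X, elog (shtarkovPrefix F r χ (xs ++ [x]) (ys ++ [y]))) := by
      intro x p y
      rw [ih (xs ++ [x]) (ys ++ [y]) (acc + logloss p y)
        (EReal.add_ne_bot' hacc (logloss_ne_bot p y)), add_assoc]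
    simp only [hstep]
    -- D x y := real sup of shtarkov over subtree
    set D : X → Y → ℝ := fun x y => ⨆ χ : List Y → X,
      shtarkovPrefix F r χ (xs ++ [x]) (ys ++ [y]) with hD
    have hDnn : ∀ x y, 0 ≤ D x y := by
      intro x y
      exact le_ciSup_of_le (bddAbove_shtarkov F hF r _ _) (Classical.arbitrary _)
        (shtarkovPrefix_nonneg F hF r _ _ _)
    have hC : ∀ (x : X) (y : Y),
        (⨆ χ : List Y → X, elog (shtarkovPrefix F r χ (xs ++ [x]) (ys ++ [y]))) =
          elog (D x y) := by
      intro x y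
      exact (elog_ciSup _ (fun χ => shtarkovPrefix_nonneg F hF r χ _ _)
        (bddAbove_shtarkov F hF r _ _)).symm
    simp only [hC]
    -- apply core lemma per x
    have hcore : ∀ x : X,
        (⨅ p : Simplex Y, ⨆ y : Y, (acc + (logloss p y + elog (D x y)))) =
          acc + elog (∑ y, D x y) := fun x => core acc hacc (D x) (hDnn x)
    simp only [hcore]
    -- RHS: decompose sup over trees
    have hRHS : (⨆ χ : List Y → X, elog (shtarkovPrefix F (r + 1) χ xs ys)) =
        ⨆ x : X, elog (∑ y, D x y) := by
      have hsucc : ∀ χ : List Y → X, shtarkovPrefix F (r + 1) χ xs ys =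
          ∑ y : Y, shtarkovPrefix F r (fun s => χ (y :: s)) (xs ++ [χ []]) (ys ++ [y]) :=
        fun χ => shtarkovPrefix_succ F r χ xs ys
      simp only [hsucc]
      have hre : (⨆ χ : List Y → X,
          elog (∑ y : Y, shtarkovPrefix F r (fun s => χ (y :: s)) (xs ++ [χ []]) (ys ++ [y]))) =
          ⨆ x : X, ⨆ h : Y → (List Y → X),
            elog (∑ y : Y, shtarkovPrefix F r (h y) (xs ++ [x]) (ys ++ [y])) := by
        apply le_antisymm
        · refine iSup_le fun χ => ?_
          refine le_trans ?_ (le_iSup _ (χ []))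
          refine le_trans ?_ (le_iSup _ (fun y s => χ (y :: s)))
          exact le_refl _
        · refine iSup_le fun x => iSup_le fun h => ?_
          refine le_trans ?_ (le_iSup _ (fun l : List Y =>
            match l with | [] => x | y :: s => h y s))
          exact le_refl _
      rw [hre]
      refine iSup_congr fun x => ?_
      rw [← elog_ciSup (fun h : Y → (List Y → X) =>
          ∑ y : Y, shtarkovPrefix F r (h y) (xs ++ [x]) (ys ++ [y]))
        (fun h => Finset.sum_nonneg fun y _ => shtarkovPrefix_nonneg F hF r _ _ _)
        ⟨∑ _y : Y, ((Fintype.card Y : ℝ)) ^ r, by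
          rintro _ ⟨h, rfl⟩
          exact Finset.sum_le_sum fun y _ => by
            exact_mod_cast shtarkovPrefix_le F hF r (h y) _ _⟩]
      congr 1
      exact ciSup_sum_eq (fun y χ => shtarkovPrefix F r χ (xs ++ [x]) (ys ++ [y]))
        (fun y => bddAbove_shtarkov F hF r _ _)
    rw [hRHS, EReal.add_iSup' hacc]
end Main

end Aux

/-- For every nonempty class `F` of sequential experts, every `t ∈ {0,…,T}`,
and all prefixes `x_{1:t} ∈ X^t`, `y_{1:t} ∈ Y^t`, the value-to-go equals the worst-case log
contextual Shtarkov sum with prefix: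
`G(F, x_{1:t}, y_{1:t}) = sup_χ log S_T(F, χ | x_{1:t}, y_{1:t})`, supremum over all context
trees `χ` of depth `T − t` (equality in the extended reals). -/
theorem valToGo_eq_sup_log_shtarkovPrefix
    {X Y : Type*} [Fintype Y] [Inhabited Y] [Nonempty X]
    (F : Set (Expert X Y)) (hF : F.Nonempty) (T t : ℕ) (ht : t ≤ T)
    (xs : List X) (ys : List Y) (hxs : xs.length = t) (hys : ys.length = t) :
    valToGo F (T - t) xs ys 0 = ⨆ χ : List Y → X, elog (shtarkovPrefix F (T - t) χ xs ys) := by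
  have h := main_induction F hF (T - t) xs ys 0 (by simp)
  rwa [zero_add] at h
end
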